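/- Let W be an algebraic Weyl curvature tensor on a Euclidean vector space V of dimension n ≥ 4. If h₁, h₂ ∈ E_W, then the commutator [h₁, h₂] = h₁h₂ − h₂h₁ belongs to g_W, i.e. W([h₁,h₂]x, y, z, u) + W(x, [h₁,h₂]y, z, u) + W(x, y, [h₁,h₂]z, u) + W(x, y, z, [h₁,h₂]u) = 0 for all x,y,z,u. -/

import Mathlib

set_option maxHeartbeats 1600000


/- Common setup: algebraic Weyl curvature tensors on a Euclidean vector space. -/

open scoped RealInnerProductSpace
open Finset

/-- A curvature-type 4-linear tensor on `V`. -/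
abbrev Tensor4 (V : Type*) [NormedAddCommGroup V] [InnerProductSpace ℝ V] : Type _ :=
  V →ₗ[ℝ] V →ₗ[ℝ] V →ₗ[ℝ] V →ₗ[ℝ] ℝ

variable {V : Type*} [NormedAddCommGroup V] [InnerProductSpace ℝ V] [FiniteDimensional ℝ V]

/-- `W` is an algebraic Weyl curvature tensor: it has the symmetries of a curvature
tensor, satisfies the first Bianchi identity, and is totally trace-free. -/
structure IsWeylTensor (W : Tensor4 V) : Prop where
  antisym₁ : ∀ x y z u, W x y z u = - W y x z u
  antisym₂ : ∀ x y z u, W x y z u = - W x y u z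
  pair_symm : ∀ x y z u, W x y z u = W z u x y
  bianchi : ∀ x y z u, W x y z u + W y z x u + W z x y u = 0
  trace_free : ∀ (b : OrthonormalBasis (Fin (Module.finrank ℝ V)) ℝ V) (x y : V),
      ∑ i, W x (b i) y (b i) = 0

/-- The extension of `W` to endomorphisms, `W(h) = Σᵢ W(eᵢ, ·, h eᵢ, ·)`,
viewed as a bilinear form (identified with an endomorphism via the metric). -/
noncomputable def weylExt {ι : Type*} [Fintype ι]
    (W : Tensor4 V) (b : OrthonormalBasis ι ℝ V) (h : V →ₗ[ℝ] V) (v w : V) : ℝ :=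
  ∑ i, W (b i) v (h (b i)) w

/-- The space `E_W`: endomorphisms `h` with `W(x,y,hz,·) + W(y,z,hx,·) + W(z,x,hy,·) = 0`. -/
def memE (W : Tensor4 V) (h : V →ₗ[ℝ] V) : Prop :=
  ∀ x y z u, W x y (h z) u + W y z (h x) u + W z x (h y) u = 0

/-- The Lie algebra `g_W` of the symmetry group of `W`. -/
def memG (W : Tensor4 V) (h : V →ₗ[ℝ] V) : Prop :=
  ∀ x y z u, W (h x) y z u + W x (h y) z u + W x y (h z) u + W x y z (h u) = 0

/-- Skew-symmetric endomorphisms (identified with 2-forms). -/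
def IsSkew (F : V →ₗ[ℝ] V) : Prop := ∀ v w, ⟪F v, w⟫ = - ⟪v, F w⟫

/-- Symmetric endomorphisms. -/
def IsSym (F : V →ₗ[ℝ] V) : Prop := ∀ v w, ⟪F v, w⟫ = ⟪v, F w⟫

/-- The bilinear form `g(F·,·)` associated to an endomorphism `F`. -/
noncomputable def form (F : V →ₗ[ℝ] V) (v w : V) : ℝ := ⟪F v, w⟫

/-- if `h₁, h₂ ∈ E_W` then `[h₁, h₂] ∈ g_W`. -/
theorem stmt8 (hn : 4 ≤ Module.finrank ℝ V) (W : Tensor4 V) (hW : IsWeylTensor W)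
    (h₁ h₂ : V →ₗ[ℝ] V) (hE₁ : memE W h₁) (hE₂ : memE W h₂) :
    memG W (h₁ ∘ₗ h₂ - h₂ ∘ₗ h₁) := by
  intro x y z u
  simp only [LinearMap.sub_apply, LinearMap.comp_apply, map_sub]
  have hsub : W (h₁ (h₂ x) - h₂ (h₁ x)) y z u = W (h₁ (h₂ x)) y z u - W (h₂ (h₁ x)) y z u := by
    have h1 := W.map_add (h₁ (h₂ x) - h₂ (h₁ x)) (h₂ (h₁ x))
    have h2 : W (h₁ (h₂ x) - h₂ (h₁ x) + h₂ (h₁ x)) = W (h₁ (h₂ x)) := by rw [sub_add_cancel]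
    rw [← h2, h1]
    simp only [LinearMap.add_apply]
    ring
  rw [hsub]

  linear_combination
    (hE₁ x y (h₂ z) u)
    - (hE₁ x y (h₂ u) z)
    + (hE₁ z u (h₂ x) y)
    - (hE₁ z u (h₂ y) x)
    - (hE₂ x y (h₁ z) u)
    + (hE₂ x y (h₁ u) z)
    - (hE₂ z u (h₁ x) y)
    + (hE₂ z u (h₁ y) x)
    + (hW.antisym₂ x y (h₁ (h₂ u)) z)
    + (hW.pair_symm (h₂ y) z (h₁ u) x)
    - (hW.pair_symm (h₁ y) z (h₂ u) x)
    + (hW.antisym₂ y (h₁ z) (h₂ x) u)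
    - (hW.pair_symm (h₂ z) x (h₁ y) u)
    - (hW.pair_symm y (h₂ z) (h₁ x) u)
    + (hW.antisym₁ u (h₁ x) (h₂ z) y)
    + (hW.pair_symm (h₁ x) z (h₂ u) y)
    + (hW.pair_symm z u (h₂ (h₁ x)) y)
    - (hW.pair_symm z u (h₁ (h₂ x)) y)
    - (hW.pair_symm z u (h₂ (h₁ y)) x)
    + (hW.pair_symm z u (h₁ (h₂ y)) x)
    + (hW.pair_symm u (h₂ y) (h₁ z) x)
    - (hW.pair_symm (h₂ x) z (h₁ u) y)
    + (hW.antisym₂ (h₁ z) x (h₂ y) u)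
    - (hW.pair_symm u (h₂ x) (h₁ z) y)
    - (hW.antisym₁ u (h₁ y) (h₂ z) x)
    + (hW.antisym₁ x (h₁ (h₂ y)) z u)
    - (hW.antisym₂ x y (h₂ (h₁ u)) z)
    + (hW.antisym₁ y (h₂ u) (h₁ x) z)
    - (hW.antisym₁ y (h₁ u) (h₂ x) z)
    - (hW.antisym₁ x (h₂ (h₁ y)) z u)
    - (hW.antisym₂ (h₁ x) u (h₂ z) y)
    - (hW.antisym₁ y (h₁ z) u (h₂ x))
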